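/- Let c, s, o be points in R^d with d(c, s) ≥ (1+ε)·d(o, s), and let c' be the point on the segment [c, s] closest to o. Then d(c', o) ≤ (1 - ε/2)·d(c, o). -/

import Mathlib

open RealInnerProductSpace

private lemma seg_aux_t (A B t ε : ℝ) (hε0 : 0 < ε)
    (H : (1+ε)^2*(A^2 - 2*t + B^2) ≤ B^2) : 0 ≤ t := by
  nlinarith [sq_nonneg A, sq_nonneg B, hε0, mul_pos hε0 hε0,
    mul_nonneg hε0.le (sq_nonneg A), mul_nonneg hε0.le (sq_nonneg B),
    mul_nonneg (mul_nonneg hε0.le hε0.le) (sq_nonneg A),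
    mul_nonneg (mul_nonneg hε0.le hε0.le) (sq_nonneg B)]

set_option maxHeartbeats 1000000 in
private lemma seg_aux_main (A B t ε : ℝ) (hε0 : 0 < ε) (hε1 : ε ≤ 1)
    (hA0 : 0 ≤ A) (hBpos : 0 < B)
    (H : (1+ε)^2*(A^2 - 2*t + B^2) ≤ B^2) :
    A^2 - t^2/B^2 ≤ ((1-ε/2)*A)^2 := by
  have ht0 : 0 ≤ t := seg_aux_t A B t ε hε0 H
  have h2 : (1+ε)^2*A^2 + (2*ε+ε^2)*B^2 ≤ 2*(1+ε)^2*t := by nlinarith [H]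
  have hsum0 : 0 ≤ (1+ε)^2*A^2 + (2*ε+ε^2)*B^2 := by positivity
  have h3 : ((1+ε)^2*A^2 + (2*ε+ε^2)*B^2)^2 ≤ (2*(1+ε)^2*t)^2 :=
    pow_le_pow_left₀ hsum0 h2 2
  have h4 : 4*((1+ε)^2*A^2)*((2*ε+ε^2)*B^2) ≤ ((1+ε)^2*A^2 + (2*ε+ε^2)*B^2)^2 := by
    nlinarith [sq_nonneg ((1+ε)^2*A^2 - (2*ε+ε^2)*B^2)]
  have h5' : (1+ε)^2 * ((2*ε+ε^2)*(A^2*B^2)) ≤ (1+ε)^2 * ((1+ε)^2*t^2) := by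
    nlinarith [h3, h4]
  have h5 : (2*ε+ε^2)*(A^2*B^2) ≤ (1+ε)^2*t^2 :=
    le_of_mul_le_mul_left h5' (by positivity)
  have h6 : (ε - ε^2/4)*(1+ε)^2 ≤ 2*ε+ε^2 := by
    nlinarith [mul_nonneg (mul_nonneg hε0.le (sub_nonneg.2 hε1))
      (show (0:ℝ) ≤ 4 + ε - ε^2 by nlinarith)]
  have hc1 : (1+ε)^2 * ((ε - ε^2/4)*(A^2*B^2)) ≤ (1+ε)^2 * t^2 := by
    nlinarith [mul_le_mul_of_nonneg_right h6
      (mul_nonneg (sq_nonneg A) (sq_nonneg B)), h5]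
  have h7 : (ε - ε^2/4)*(A^2*B^2) ≤ t^2 :=
    le_of_mul_le_mul_left hc1 (by positivity)
  have ht2 : (ε - ε^2/4)*A^2 ≤ t^2/B^2 := by
    rw [le_div_iff₀ (by positivity : (0:ℝ) < B^2)]
    nlinarith [h7]
  nlinarith [ht2]

private lemma seg_aux_clamp (A n ε : ℝ) (hA0 : 0 ≤ A) (hε0 : 0 < ε) (hε1 : ε ≤ 1)
    (hc : (1+ε)*n ≤ A) : n ≤ (1-ε/2)*A := by
  nlinarith [hc, mul_nonneg (mul_nonneg hε0.le (show (0:ℝ) ≤ 1-ε by linarith)) hA0, hε0]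

set_option maxHeartbeats 1000000 in
theorem segment_projection_progress (d : ℕ) (c s o c' : EuclideanSpace ℝ (Fin d))
    (ε : ℝ) (hε0 : 0 < ε) (hε1 : ε ≤ 1)
    (hfar : (1 + ε) * dist o s ≤ dist c s)
    (hc'mem : c' ∈ segment ℝ c s)
    (hc'min : dist o c' = Metric.infDist o (segment ℝ c s)) :
    dist c' o ≤ (1 - ε/2) * dist c o := by
  have hmin : ∀ x ∈ segment ℝ c s, dist o c' ≤ dist o x := by
    intro x hx
    rw [hc'min]
    exact Metric.infDist_le_dist_of_mem hx
  set u := o - c with hu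
  set v := s - c with hv
  have hA : dist c o = ‖u‖ := by rw [dist_comm, dist_eq_norm]
  have hB : dist c s = ‖v‖ := by rw [dist_comm, dist_eq_norm]
  have hOS : dist o s = ‖u - v‖ := by
    rw [dist_eq_norm, hu, hv]; congr 1; abel
  set A := ‖u‖ with hAdef
  set B := ‖v‖ with hBdef
  set t := (inner ℝ u v : ℝ) with htdef
  have hA0 : 0 ≤ A := norm_nonneg _
  have hB0 : 0 ≤ B := norm_nonneg _
  have hN0 : 0 ≤ ‖u - v‖ := norm_nonneg _
  have hfar' : (1 + ε) * ‖u - v‖ ≤ B := by rw [← hOS, ← hB]; exact hfar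
  have hNsq : ‖u - v‖ ^ 2 = A ^ 2 - 2 * t + B ^ 2 := norm_sub_sq_real u v
  clear_value t A B
  have H : (1 + ε)^2 * (A ^ 2 - 2 * t + B ^ 2) ≤ B ^ 2 := by
    have h1 : ((1 + ε) * ‖u - v‖)^2 ≤ B^2 := by
      apply pow_le_pow_left₀ (by positivity) hfar'
    nlinarith [h1, hNsq]
  rcases eq_or_lt_of_le hB0 with hBz | hBpos
  · -- degenerate case: c = s, then also o = s and c' = c
    have hNz : ‖u - v‖ = 0 := by nlinarith [hfar', hN0]
    have hsc : s = c := by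
      have hv0 : v = 0 := by rw [← norm_eq_zero, ← hBdef]; exact hBz.symm
      have : s - c = 0 := by rw [← hv]; exact hv0
      exact sub_eq_zero.mp this
    have hosz : o = s := by
      have e : u - v = o - s := by rw [hu, hv]; abel
      have : o - s = 0 := by rw [← e]; exact norm_eq_zero.mp hNz
      exact sub_eq_zero.mp this
    have hc'c : c' = c := by
      rw [hsc, segment_same] at hc'mem; exact hc'mem
    rw [hc'c, hosz, hsc]; simp
  · -- main case: B > 0
    have ht0 : 0 ≤ t := seg_aux_t A B t ε hε0 H
    rcases le_or_gt t (B^2) with hcase | hcase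
    · -- projection lies in the segment: λ = t/B²
      set l := t / B^2 with hldef
      have hl0 : 0 ≤ l := div_nonneg ht0 (by positivity)
      have hl1 : l ≤ 1 := by
        rw [hldef, div_le_one (by positivity)]; exact hcase
      have hxmem : (1 - l) • c + l • s ∈ segment ℝ c s :=
        ⟨1 - l, l, by linarith, hl0, by ring, rfl⟩
      have key := hmin _ hxmem
      have hxo : o - ((1 - l) • c + l • s) = u - l • v := by
        rw [hu, hv, smul_sub, sub_smul, one_smul]
        abel
      have hdx : dist o ((1 - l) • c + l • s) = ‖u - l • v‖ := by
        rw [dist_eq_norm, hxo]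
      have hdxsq : ‖u - l • v‖ ^ 2 = A^2 - 2*l*t + l^2 * B^2 := by
        rw [norm_sub_sq_real, real_inner_smul_right, norm_smul,
          Real.norm_eq_abs, abs_of_nonneg hl0, ← htdef, ← hAdef, ← hBdef]
        ring
      have hkey2 : (dist o c')^2 ≤ A^2 - t^2/B^2 := by
        have h3 : (dist o c')^2 ≤ ‖u - l • v‖^2 := by
          apply pow_le_pow_left₀ dist_nonneg (by rw [← hdx]; exact key)
        rw [hdxsq, hldef] at h3
        have hB2 : B^2 ≠ 0 := by positivity
        calc (dist o c')^2 ≤ A^2 - 2*(t/B^2)*t + (t/B^2)^2*B^2 := h3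
          _ = A^2 - t^2/B^2 := by field_simp; ring
      have h8 : (dist o c')^2 ≤ ((1 - ε/2)*A)^2 :=
        le_trans hkey2 (seg_aux_main A B t ε hε0 hε1 hA0 hBpos H)
      have hfin := Real.sqrt_le_sqrt h8
      rw [Real.sqrt_sq dist_nonneg,
        Real.sqrt_sq (mul_nonneg (by linarith) hA0)] at hfin
      rw [dist_comm, hA]
      exact hfin
    · -- projection clamps at s
      have key := hmin s (right_mem_segment ℝ c s)
      have hCS : t ≤ A * B := by
        rw [htdef, hAdef, hBdef]; exact real_inner_le_norm u v
      have hBA : B ≤ A := by nlinarith [hcase, hCS, hBpos]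
      have hc : (1+ε) * ‖u - v‖ ≤ A := le_trans hfar' hBA
      have hkey : dist o c' ≤ ‖u - v‖ := by rw [← hOS]; exact key
      rw [dist_comm c' o, hA]
      exact le_trans hkey (seg_aux_clamp A ‖u - v‖ ε hA0 hε0 hε1 hc)
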